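/- In the multi-period model, suppose x = (x_{ij}^t) ∈ ℝ_{≥0}^{n×m×T} satisfies u_i := Σ_t Σ_j v_{ij} x_{ij}^t − d_i > 0 for all i, and λ_j^t ≥ 0, λ_j ≥ 0 are multipliers such that for all i, j, t one has B_i · v_{ij}/u_i ≤ λ_j^t + λ_j, with equality whenever x_{ij}^t > 0. Setting prices p_j^t = λ_j^t + λ_j, every buyer spends exactly their demand-inflated budget: Σ_t Σ_j x_{ij}^t p_j^t = B_i · (1 + d_i/u_i) for every i. -/

import Mathlib

open Finset

/-- In the multi-period sum-utility model, under the KKT stationarity and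
complementary-slackness conditions, with prices `p j t = lam j t + mu j`,
every buyer spends exactly their demand-inflated budget. -/
theorem multi_period_demand_inflated_budget
    (n m T : ℕ) (v : Fin n → Fin m → ℝ) (B d : Fin n → ℝ)
    (x : Fin n → Fin m → Fin T → ℝ)
    (lam : Fin m → Fin T → ℝ) (mu : Fin m → ℝ)
    (hv : ∀ i j, 0 ≤ v i j) (hB : ∀ i, 0 < B i) (hd : ∀ i, 0 ≤ d i)
    (hx : ∀ i j t, 0 ≤ x i j t)
    (hlam : ∀ j t, 0 ≤ lam j t) (hmu : ∀ j, 0 ≤ mu j)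
    (hu : ∀ i, 0 < (∑ t, ∑ j, v i j * x i j t) - d i)
    (hkkt : ∀ i j t,
      B i * v i j / ((∑ t', ∑ j', v i j' * x i j' t') - d i) ≤ lam j t + mu j)
    (hcs : ∀ i j t, 0 < x i j t →
      B i * v i j / ((∑ t', ∑ j', v i j' * x i j' t') - d i) = lam j t + mu j) :
    ∀ i, ∑ t, ∑ j, x i j t * (lam j t + mu j)
      = B i * (1 + d i / ((∑ t', ∑ j', v i j' * x i j' t') - d i)) := by
  intro i
  set u : ℝ := (∑ t', ∑ j', v i j' * x i j' t') - d i with hu_def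
  have hu' : 0 < u := hu i
  have key : ∀ t j, x i j t * (lam j t + mu j) = x i j t * (B i * v i j / u) := by
    intro t j
    rcases lt_or_eq_of_le (hx i j t) with hpos | hzero
    · rw [hcs i j t hpos]
    · rw [← hzero]; ring
  have hsum : ∑ t, ∑ j, x i j t * (lam j t + mu j)
      = (B i / u) * ∑ t, ∑ j, v i j * x i j t := by
    rw [Finset.mul_sum]
    refine Finset.sum_congr rfl fun t _ => ?_
    rw [Finset.mul_sum]
    refine Finset.sum_congr rfl fun j _ => ?_
    rw [key t j]; field_simp
  have hvx : ∑ t, ∑ j, v i j * x i j t = u + d i := by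
    rw [hu_def]; ring
  rw [hsum, hvx]
  field_simp
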